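/- Let s > 0, α, γ ≥ 0, and let f : ℕ → ℝ satisfy |f(n)| ≤ C·R^n for some constants C, R > 0. Define the boundary SIP reservoir generator L^{α,γ} f(n) = α(2s + n)(f(n+1) − f(n)) + γ n (f(n−1) − f(n)), and the Poisson kernel 𝒢f(z) = e^{−z} ∑_{n≥0} (z^n/n!) f(n). Then 𝒢f is twice differentiable on (0,∞) and for all z > 0: 𝒢(L^{α,γ} f)(z) = α z (𝒢f)''(z) + (2sα − (γ − α) z)(𝒢f)'(z). (The boundary generator of the symmetric inclusion process is Poisson-intertwined with the boundary generator of the Brownian energy process.) -/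

import Mathlib

open MeasureTheory Real

/-- The Poisson expectation kernel `𝒢f(z) = e^{−z} ∑_{n≥0} (z^n/n!) f(n)`. -/
noncomputable def sipPoissonKernel (f : ℕ → ℝ) (z : ℝ) : ℝ :=
  Real.exp (-z) * ∑' n : ℕ, z ^ n / n.factorial * f n

/-- The boundary (reservoir) generator of the symmetric inclusion process:
`L^{α,γ} f(n) = α(2s+n)(f(n+1) − f(n)) + γ n (f(n−1) − f(n))`. -/
def sipBoundaryGen (s α γ : ℝ) (f : ℕ → ℝ) (n : ℕ) : ℝ :=
  α * (2 * s + n) * (f (n + 1) - f n) + γ * n * (f (n - 1) - f n)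

/-- The power-series-type sum `∑' n, z^n/n! * a n`. -/
noncomputable def pser (a : ℕ → ℝ) (z : ℝ) : ℝ := ∑' n : ℕ, z ^ n / n.factorial * a n

lemma pser_eq (a : ℕ → ℝ) (z : ℝ) : pser a z = ∑' n : ℕ, z ^ n / n.factorial * a n := rfl

lemma pser_term_bound (a : ℕ → ℝ) (C R : ℝ) (ha : ∀ n, |a n| ≤ C * R ^ n) (z : ℝ) (n : ℕ) :
    ‖z ^ n / n.factorial * a n‖ ≤ C * ((|z| * R) ^ n / n.factorial) := by
  rw [Real.norm_eq_abs, abs_mul, abs_div, abs_pow, abs_of_nonneg (show (0:ℝ) ≤ n.factorial by positivity)]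
  calc |z| ^ n / n.factorial * |a n| ≤ |z| ^ n / n.factorial * (C * R ^ n) := by
        gcongr
        exact ha n
    _ = C * ((|z| * R) ^ n / n.factorial) := by rw [mul_pow]; ring

lemma summable_pser (a : ℕ → ℝ) (C R : ℝ) (ha : ∀ n, |a n| ≤ C * R ^ n) (z : ℝ) :
    Summable (fun n : ℕ => z ^ n / n.factorial * a n) :=
  Summable.of_norm_bounded ((Real.summable_pow_div_factorial (|z| * R)).mul_left C)
    (pser_term_bound a C R ha z)

lemma shift_term (z b : ℝ) (n : ℕ) :
    z ^ (n + 1) / (n + 1).factorial * (((n : ℝ) + 1) * b) = z * (z ^ n / n.factorial * b) := by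
  have h : (((n + 1).factorial : ℝ)) = ((n : ℝ) + 1) * n.factorial := by
    rw [Nat.factorial_succ]; push_cast; ring
  have h1 : ((n : ℝ) + 1) ≠ 0 := by positivity
  have h2 : ((n.factorial : ℝ)) ≠ 0 := Nat.cast_ne_zero.mpr n.factorial_ne_zero
  rw [h, pow_succ]
  field_simp

lemma hasDerivAt_pser (a : ℕ → ℝ) (C R : ℝ) (hC : 0 ≤ C) (hR : 0 < R)
    (ha : ∀ n, |a n| ≤ C * R ^ n) (z : ℝ) :
    HasDerivAt (pser a) (pser (fun n => a (n + 1)) z) z := by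
  set r : ℝ := |z| + 1 with hrdef
  have hr : 0 < r := by positivity
  set u : ℕ → ℝ := fun n => C * R * ((r * R) ^ (n - 1) / (n - 1).factorial) with hu_def
  have hu : Summable u := by
    apply Summable.mul_left
    refine (summable_nat_add_iff 1).mp ?_
    simpa using Real.summable_pow_div_factorial (r * R)
  have hbound : ∀ (n : ℕ) (y : ℝ), y ∈ Metric.ball (0 : ℝ) r →
      ‖((n : ℝ) * y ^ (n - 1)) * (a n / n.factorial)‖ ≤ u n := by
    intro n y hy
    have hyr : |y| ≤ r := by
      rw [Metric.mem_ball, Real.dist_eq, sub_zero] at hy; exact hy.le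
    match n with
    | 0 => simp [hu_def]; positivity
    | (m + 1) =>
      rw [Real.norm_eq_abs, abs_mul, abs_mul, abs_div, abs_pow]
      simp only [Nat.add_sub_cancel]
      have h1 : |((m + 1 : ℕ) : ℝ)| = (m : ℝ) + 1 := by
        rw [abs_of_nonneg (by positivity)]; push_cast; ring
      have h2 : |(((m + 1).factorial : ℕ) : ℝ)| = ((m : ℝ) + 1) * m.factorial := by
        rw [abs_of_nonneg (by positivity), Nat.factorial_succ]; push_cast; ring
      rw [h1, h2]
      have hm1 : ((m : ℝ) + 1) ≠ 0 := by positivity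
      have hmf : ((m.factorial : ℕ) : ℝ) ≠ 0 := Nat.cast_ne_zero.mpr m.factorial_ne_zero
      have key : ((m : ℝ) + 1) * |y| ^ m * (|a (m + 1)| / (((m : ℝ) + 1) * m.factorial))
          = |y| ^ m * |a (m + 1)| / m.factorial := by
        field_simp
      rw [key]
      calc |y| ^ m * |a (m + 1)| / m.factorial
          ≤ r ^ m * (C * R ^ (m + 1)) / m.factorial := by
            gcongr
            exact ha (m + 1)
        _ = u (m + 1) := by
            simp only [hu_def, Nat.add_sub_cancel, mul_pow, pow_succ]
            ring
  have hz : z ∈ Metric.ball (0 : ℝ) r := by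
    rw [Metric.mem_ball, Real.dist_eq, sub_zero, hrdef]; linarith
  have hsub0 : Summable (fun n : ℕ => z ^ n * (a n / n.factorial)) := by
    refine (summable_pser a C R ha z).congr fun n => by ring
  have H := hasDerivAt_tsum_of_isPreconnected hu Metric.isOpen_ball
    (convex_ball (0 : ℝ) r).isPreconnected
    (fun n y _ => (hasDerivAt_pow n y).mul_const (a n / n.factorial))
    hbound hz hsub0 hz
  have hfun : (fun w : ℝ => ∑' n : ℕ, w ^ n * (a n / n.factorial)) = pser a := by
    funext w; rw [pser_eq]; exact tsum_congr fun n => by ring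
  have hval : (∑' n : ℕ, ((n : ℝ) * z ^ (n - 1)) * (a n / n.factorial))
      = pser (fun n => a (n + 1)) z := by
    have hs : Summable (fun n : ℕ => ((n : ℝ) * z ^ (n - 1)) * (a n / n.factorial)) :=
      Summable.of_norm_bounded hu fun n => hbound n z hz
    rw [Summable.tsum_eq_zero_add hs]
    simp only [Nat.cast_zero, zero_mul, zero_add, pser_eq, Nat.add_sub_cancel]
    refine tsum_congr fun n => ?_
    have hmf : ((n.factorial : ℕ) : ℝ) ≠ 0 := Nat.cast_ne_zero.mpr n.factorial_ne_zero
    have hm1 : ((n : ℝ) + 1) ≠ 0 := by positivity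
    rw [Nat.factorial_succ]
    push_cast
    field_simp
  rw [hfun, hval] at H
  exact H

lemma tsum_shift_mul (b : ℕ → ℝ) (z : ℝ)
    (hs : Summable fun n : ℕ => z ^ n / n.factorial * ((n : ℝ) * b n)) :
    ∑' n : ℕ, z ^ n / n.factorial * ((n : ℝ) * b n) = z * pser (fun n => b (n + 1)) z := by
  rw [Summable.tsum_eq_zero_add hs]
  simp only [Nat.cast_zero, zero_mul, mul_zero, zero_add]
  rw [pser_eq, ← tsum_mul_left]
  refine tsum_congr fun n => ?_
  have := shift_term z (b (n + 1)) n
  push_cast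
  exact this

lemma summable_nmul (b : ℕ → ℝ) (C R : ℝ) (hC : 0 ≤ C) (hR : 0 ≤ R)
    (hb : ∀ n, |b n| ≤ C * R ^ n) (z : ℝ) :
    Summable fun n : ℕ => z ^ n / n.factorial * ((n : ℝ) * b n) := by
  refine summable_pser _ C (2 * R) (fun n => ?_) z
  have hn2 : (n : ℝ) ≤ 2 ^ n := by
    exact_mod_cast (Nat.lt_two_pow_self (n := n)).le
  calc |(n : ℝ) * b n| = (n : ℝ) * |b n| := by
        rw [abs_mul, abs_of_nonneg (by positivity : (0:ℝ) ≤ (n:ℝ))]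
    _ ≤ 2 ^ n * (C * R ^ n) := by
        apply mul_le_mul hn2 (hb n) (abs_nonneg _) (by positivity)
    _ = C * (2 * R) ^ n := by rw [mul_pow]; ring

/-- The boundary generator of the symmetric inclusion process is Poisson-intertwined with
the boundary generator of the Brownian energy process
`𝓛^{α,γ} = α z ∂_z² + (2sα − (γ−α)z) ∂_z`. -/
theorem sip_bep_boundary_intertwining (s α γ : ℝ) (hs : 0 < s) (hα : 0 ≤ α) (hγ : 0 ≤ γ)
    (f : ℕ → ℝ) (C R : ℝ) (hC : 0 < C) (hR : 0 < R) (hf : ∀ n, |f n| ≤ C * R ^ n) :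
    (∀ z : ℝ, 0 < z →
      DifferentiableAt ℝ (sipPoissonKernel f) z ∧
      DifferentiableAt ℝ (deriv (sipPoissonKernel f)) z) ∧
    (∀ z : ℝ, 0 < z →
      sipPoissonKernel (sipBoundaryGen s α γ f) z
        = α * z * deriv (deriv (sipPoissonKernel f)) z +
          (2 * s * α - (γ - α) * z) * deriv (sipPoissonKernel f) z) := by
  -- coefficient bounds
  have hb1 : ∀ n, |f (n + 1)| ≤ (C * R) * R ^ n := fun n => by
    calc |f (n + 1)| ≤ C * R ^ (n + 1) := hf _
      _ = (C * R) * R ^ n := by rw [pow_succ]; ring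
  have hb2 : ∀ n, |f (n + 2)| ≤ (C * R * R) * R ^ n := fun n => by
    calc |f (n + 2)| ≤ (C * R) * R ^ (n + 1) := hb1 _
      _ = (C * R * R) * R ^ n := by rw [pow_succ]; ring
  have hbp : ∀ n, |f (n - 1)| ≤ (C * max 1 R⁻¹) * R ^ n := by
    intro n
    match n with
    | 0 =>
      simp only [Nat.zero_sub, pow_zero, mul_one]
      calc |f 0| ≤ C * R ^ 0 := hf 0
        _ = C := by ring
        _ ≤ C * max 1 R⁻¹ := le_mul_of_one_le_right hC.le (le_max_left _ _)
    | (m + 1) =>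
      simp only [Nat.add_sub_cancel]
      have hRm : R ^ m = R⁻¹ * R ^ (m + 1) := by
        rw [pow_succ]; field_simp
      calc |f m| ≤ C * R ^ m := hf m
        _ = C * R⁻¹ * R ^ (m + 1) := by rw [hRm]; ring
        _ ≤ C * max 1 R⁻¹ * R ^ (m + 1) := by
            gcongr
            exact le_max_right _ _
  -- derivatives of the series part
  have hd0 : ∀ w : ℝ, HasDerivAt (pser f) (pser (fun n => f (n + 1)) w) w :=
    hasDerivAt_pser f C R hC.le hR hf
  have hd1 : ∀ w : ℝ, HasDerivAt (pser (fun n => f (n + 1))) (pser (fun n => f (n + 2)) w) w :=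
    hasDerivAt_pser _ (C * R) R (by positivity) hR hb1
  have hexp : ∀ w : ℝ, HasDerivAt (fun w : ℝ => Real.exp (-w)) (-Real.exp (-w)) w := fun w => by
    simpa using (hasDerivAt_neg w).exp
  have hP : ∀ w : ℝ, HasDerivAt (sipPoissonKernel f)
      (Real.exp (-w) * (pser (fun n => f (n + 1)) w - pser f w)) w := fun w => by
    have h := (hexp w).mul (hd0 w)
    have heq : sipPoissonKernel f = fun w => Real.exp (-w) * pser f w := rfl
    rw [heq]
    exact h.congr_deriv (by ring)
  have hderiv1 : deriv (sipPoissonKernel f)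
      = fun w => Real.exp (-w) * (pser (fun n => f (n + 1)) w - pser f w) :=
    funext fun w => (hP w).deriv
  have hQ : ∀ w : ℝ, HasDerivAt
      (fun w => Real.exp (-w) * (pser (fun n => f (n + 1)) w - pser f w))
      (Real.exp (-w) * ((pser (fun n => f (n + 2)) w - pser (fun n => f (n + 1)) w)
        - (pser (fun n => f (n + 1)) w - pser f w))) w := fun w => by
    have h := (hexp w).mul ((hd1 w).sub (hd0 w))
    exact h.congr_deriv (by rw [Pi.sub_apply]; ring)
  constructor
  · intro z _
    refine ⟨(hP z).differentiableAt, ?_⟩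
    rw [hderiv1]
    exact (hQ z).differentiableAt
  · intro z _
    have hD1 : deriv (sipPoissonKernel f) z
        = Real.exp (-z) * (pser (fun n => f (n + 1)) z - pser f z) := by
      rw [hderiv1]
    have hD2 : deriv (deriv (sipPoissonKernel f)) z
        = Real.exp (-z) * ((pser (fun n => f (n + 2)) z - pser (fun n => f (n + 1)) z)
          - (pser (fun n => f (n + 1)) z - pser f z)) := by
      rw [hderiv1]
      exact (hQ z).deriv
    -- summability of the pieces
    have S0 : Summable (fun n : ℕ => z ^ n / n.factorial * f n) := summable_pser f C R hf z
    have S1 : Summable (fun n : ℕ => z ^ n / n.factorial * f (n + 1)) :=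
      summable_pser _ (C * R) R hb1 z
    have SN0 : Summable (fun n : ℕ => z ^ n / n.factorial * ((n : ℝ) * f n)) :=
      summable_nmul f C R hC.le hR.le hf z
    have SN1 : Summable (fun n : ℕ => z ^ n / n.factorial * ((n : ℝ) * f (n + 1))) :=
      summable_nmul _ (C * R) R (by positivity) hR.le hb1 z
    have SNp : Summable (fun n : ℕ => z ^ n / n.factorial * ((n : ℝ) * f (n - 1))) :=
      summable_nmul _ (C * max 1 R⁻¹) R (by positivity) hR.le hbp z
    -- shift identities
    have T0 : ∑' n : ℕ, z ^ n / n.factorial * ((n : ℝ) * f n)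
        = z * pser (fun n => f (n + 1)) z := tsum_shift_mul f z SN0
    have T1 : ∑' n : ℕ, z ^ n / n.factorial * ((n : ℝ) * f (n + 1))
        = z * pser (fun n => f (n + 2)) z := tsum_shift_mul _ z SN1
    have Tp : ∑' n : ℕ, z ^ n / n.factorial * ((n : ℝ) * f (n - 1))
        = z * pser f z := by
      have h := tsum_shift_mul (fun n => f (n - 1)) z SNp
      simpa using h
    -- expand the generator
    have expand : (fun n : ℕ => z ^ n / n.factorial * sipBoundaryGen s α γ f n)
        = fun n : ℕ =>
          (2 * s * α * (z ^ n / n.factorial * f (n + 1))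
            + α * (z ^ n / n.factorial * ((n : ℝ) * f (n + 1)))
            + γ * (z ^ n / n.factorial * ((n : ℝ) * f (n - 1))))
          - (2 * s * α * (z ^ n / n.factorial * f n)
            + (α + γ) * (z ^ n / n.factorial * ((n : ℝ) * f n))) := by
      funext n
      simp only [sipBoundaryGen]
      ring
    have hT : (∑' n : ℕ, z ^ n / n.factorial * sipBoundaryGen s α γ f n)
        = (2 * s * α * pser (fun n => f (n + 1)) z
            + α * (z * pser (fun n => f (n + 2)) z)
            + γ * (z * pser f z))
          - (2 * s * α * pser f z
            + (α + γ) * (z * pser (fun n => f (n + 1)) z)) := by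
      rw [expand]
      rw [Summable.tsum_sub (((S1.mul_left _).add (SN1.mul_left _)).add (SNp.mul_left _))
        ((S0.mul_left _).add (SN0.mul_left _))]
      rw [Summable.tsum_add ((S1.mul_left _).add (SN1.mul_left _)) (SNp.mul_left _)]
      rw [Summable.tsum_add (S1.mul_left _) (SN1.mul_left _)]
      rw [Summable.tsum_add (S0.mul_left _) (SN0.mul_left _)]
      rw [tsum_mul_left, tsum_mul_left, tsum_mul_left, tsum_mul_left, tsum_mul_left]
      rw [T0, T1, Tp]
      rfl
    have hLHS : sipPoissonKernel (sipBoundaryGen s α γ f) z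
        = Real.exp (-z) * ∑' n : ℕ, z ^ n / n.factorial * sipBoundaryGen s α γ f n := rfl
    rw [hLHS, hT, hD1, hD2]
    ring
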